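/- Let L consist of a ternary relation R, a 10-ary relation S and an 11-ary relation U, let f(x) = log₈(x+1) (a good function with f′(x) ≤ 1/(2(x+1))), and let M_f be the generic structure of (K_f, ≤). Let r = 8⁹ − 11 and let A be the L-structure with domain {a₁,…,a₁₀, u₁,…,u_r} whose relations are exactly S(a₁,…,a₁₀) and U(a₁,…,a₁₀,u_i) for 1 ≤ i ≤ r. Let E = {(α(a₁),…,α(a₁₀)) : α an embedding of A into M_f with α(A) ≤ M_f} ⊆ M_f^{10}. Then there is no 10-tuple (b₁,…,b₁₀) of distinct elements of M_f with d^{M_f}({b₁,…,b₁₀}) = 10 such that for every 9-element subset I of {1,…,10}, the tuple (b_i)_{i∈I} lies in the image of E under the projection π_I : M_f^{10} → M_f^I. (In particular, M_f does not satisfy the independent amalgamation property of Corollary 3.2 with dimension d, and M_f is not MS-measurable.) -/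

import Mathlib

open FirstOrder Set

namespace MeasureAmalgamation

variable (L : FirstOrder.Language)

/-- The predimension `δ(A) = |A| − Σ_i |R_i[A]|` of a (finite) subset `A` of an
`L`-structure: the number of points minus the number of relation instances inside `A`. -/
noncomputable def delta {N : Type*} [L.Structure N] (A : Set N) : ℤ :=
  (A.ncard : ℤ) -
    (Set.ncard {p : Σ n, L.Relations n × (Fin n → N) |
      (∀ i, p.2.2 i ∈ A) ∧ Language.Structure.RelMap p.2.1 p.2.2} : ℤ)

/-- `A ≤ B` (`A` is self-sufficient in `B`): `A ⊆ B` and `δ(A) < δ(B′)` whenever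
`A ⊊ B′ ⊆ B` with `B′` finite. -/
def SelfSuffIn {N : Type*} [L.Structure N] (A B : Set N) : Prop :=
  A ⊆ B ∧ ∀ B' : Set N, A ⊂ B' → B' ⊆ B → B'.Finite → delta L A < delta L B'

/-- `A ≤ M` for the (possibly infinite) ambient structure:
`A ∩ X ≤ X` for every finite `X ⊆ M`. -/
def SelfSuffM {N : Type*} [L.Structure N] (A : Set N) : Prop :=
  ∀ X : Set N, X.Finite → SelfSuffIn L (A ∩ X) X

/-- The closure `cl_B(X)`: the smallest self-sufficient subset of `B` containing `X`. -/
def clIn {N : Type*} [L.Structure N] (X B : Set N) : Set N :=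
  ⋂₀ {A : Set N | X ⊆ A ∧ SelfSuffIn L A B}

/-- The dimension `d^B(X) = δ(cl_B(X))`. -/
noncomputable def dIn {N : Type*} [L.Structure N] (X B : Set N) : ℤ :=
  delta L (clIn L X B)

/-- The closure `cl_M(X)` in the ambient structure. -/
def clM {N : Type*} [L.Structure N] (X : Set N) : Set N :=
  ⋂₀ {A : Set N | X ⊆ A ∧ SelfSuffM L A}

/-- The dimension `d(X) = δ(cl_M(X))` in the ambient structure. -/
noncomputable def dM {N : Type*} [L.Structure N] (X : Set N) : ℤ :=
  delta L (clM L X)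

/-- Membership in the class `K_f`: every (finite) subset `X` satisfies
`δ(X) ≥ f(|X|)`. -/
def InKf (f : ℝ → ℝ) (B : Type*) [L.Structure B] : Prop :=
  ∀ X : Set B, X.Finite → f X.ncard ≤ (delta L X : ℝ)

/-- `f` is a good function (continuous, increasing, unbounded) certified by the standard
conditions guaranteeing the free amalgamation property for `(K_f, ≤)`: `f` has a
non-increasing right derivative `g` with `g(x) ≤ 1/(x+1)`. -/
structure IsGoodFun (f g : ℝ → ℝ) : Prop where
  cont : ContinuousOn f (Set.Ici 0)
  mono : StrictMonoOn f (Set.Ici 0)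
  unbounded : Filter.Tendsto f Filter.atTop Filter.atTop
  rightDeriv : ∀ x ∈ Set.Ici (0 : ℝ), HasDerivWithinAt f (g x) (Set.Ici x) x
  anti : AntitoneOn g (Set.Ici 0)
  bound : ∀ x ∈ Set.Ici (0 : ℝ), g x ≤ 1 / (x + 1)

/-- Any subset of a structure in a relational language is (the carrier of) a
substructure. -/
def relSub {N : Type*} [L.Structure N] [L.IsRelational] (A : Set N) :
    L.Substructure N where
  carrier := A
  fun_mem := fun {_} f => isEmptyElim f

/-- `N` is the generic structure `M_f` of the amalgamation class `(K_f, ≤)`: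
(1) `N` is the union of a chain of finite self-sufficient substructures, all in `K_f`;
(2) (`≤`-extension property) if `A ≤ N` is finite and `A ≤ B ∈ K_f`, then there is a
`≤`-embedding `β : B → N` fixing `A` pointwise. -/
def IsGeneric {N : Type*} [L.Structure N] [L.IsRelational] (f : ℝ → ℝ) : Prop :=
  (∃ c : ℕ → Set N, Monotone c ∧ (∀ k, (c k).Finite) ∧ (∀ k, SelfSuffM L (c k)) ∧
    (∀ (k : ℕ) (X : Set N), X ⊆ c k → f X.ncard ≤ (delta L X : ℝ)) ∧
    (⋃ k, c k) = Set.univ) ∧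
  (∀ A : Set N, A.Finite → SelfSuffM L A →
    ∀ (B : Type) (_ : Fintype B) (_ : L.Structure B), InKf L f B →
      ∀ e : ↥(relSub L A) ↪[L] B,
        SelfSuffIn L (Set.range ⇑e) (Set.univ : Set B) →
        ∃ g : B ↪[L] N, (∀ a : ↥(relSub L A), g (e a) = ↑a) ∧
          SelfSuffM L (Set.range ⇑g))

/-- Two tuples have the same complete type over `∅`. -/
def sameType {N : Type*} [L.Structure N] {k : ℕ} (a a' : Fin k → N) : Prop :=
  ∀ φ : L.Formula (Fin k), φ.Realize a ↔ φ.Realize a'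

/-- The locus `loc(b̄/ā)`: the set of realizations in `N` of the complete type of `b̄`
over `ā`. -/
def locus {N : Type*} [L.Structure N] {k m : ℕ} (a : Fin k → N) (b : Fin m → N) :
    Set (Fin m → N) :=
  {y | sameType L (Fin.append a y) (Fin.append a b)}

/-- A subset of `M` viewed as a subset of the power `M^{Fin 1}`. -/
def toDef1 (M : Type*) (s : Set M) : Set (Fin 1 → M) := {x | x 0 ∈ s}

/-- Algebraic closure: `b ∈ acl(Z)` iff `b` belongs to some finite `Z`-definable set. -/
def inAcl {M : Type*} [L.Structure M] (Z : Set M) (b : M) : Prop :=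
  ∃ s : Set M, b ∈ s ∧ s.Finite ∧ Z.Definable L (toDef1 M s)


/-- The relations of the example language: a ternary `R`, a 10-ary `S` and an 11-ary
`U`. -/
inductive ExRels : ℕ → Type where
  | R : ExRels 3
  | S : ExRels 10
  | U : ExRels 11

/-- The example language, with relations `R` (ternary), `S` (10-ary), `U` (11-ary). -/
def ExLang : FirstOrder.Language := ⟨fun _ => Empty, ExRels⟩

instance : ExLang.IsRelational := fun _ => inferInstanceAs (IsEmpty Empty)

instance : Finite (Σ n, ExLang.Relations n) := by
  have hsurj : Function.Surjective (fun i : Fin 3 =>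
      (match i with
        | 0 => ⟨3, ExRels.R⟩
        | 1 => ⟨10, ExRels.S⟩
        | 2 => ⟨11, ExRels.U⟩ : Σ n, ExLang.Relations n)) := by
    rintro ⟨n, r⟩
    cases r with
    | R => exact ⟨0, rfl⟩
    | S => exact ⟨1, rfl⟩
    | U => exact ⟨2, rfl⟩
  exact Finite.of_surjective _ hsurj

/-- `r = 8⁹ − 11`. -/
def rBig : ℕ := 8 ^ 9 - 11

/-- The domain of the structure `A`: points `a₁,…,a₁₀` and `u₁,…,u_r`. -/
abbrev ADom : Type := Fin 10 ⊕ Fin rBig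

/-- The structure `A`: its relations are exactly `S(a₁,…,a₁₀)` and `U(a₁,…,a₁₀,uⱼ)` for
`1 ≤ j ≤ r`. -/
instance : ExLang.Structure ADom where
  funMap := fun f => isEmptyElim f
  RelMap := fun {_} rel x =>
    match rel with
    | ExRels.R => False
    | ExRels.S => x = fun i : Fin 10 => Sum.inl i
    | ExRels.U => ∃ j : Fin rBig,
        x = Fin.snoc (fun i : Fin 10 => (Sum.inl i : ADom)) (Sum.inr j)

/-- The good function `f(x) = log₈(x+1)`. -/
noncomputable def fEx : ℝ → ℝ := fun x => Real.logb 8 (x + 1)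

/-! ### Auxiliary lemmas -/

section SelfSuff

variable {N : Type*} [L.Structure N]

lemma selfSuffM_univ : SelfSuffM L (univ : Set N) := by
  intro X hX
  rw [Set.univ_inter]
  refine ⟨subset_rfl, fun B' h1 h2 _ => absurd (subset_antisymm h1.subset h2) h1.ne⟩

lemma SelfSuffM.inter {A B : Set N} (hA : SelfSuffM L A) (hB : SelfSuffM L B) :
    SelfSuffM L (A ∩ B) := by
  intro X hX
  refine ⟨inter_subset_right, ?_⟩
  intro Y hss hsub hYfin
  have hWfin : (B ∩ Y).Finite := hYfin.inter_of_right B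
  have hZW : A ∩ B ∩ X = A ∩ (B ∩ Y) := by
    apply subset_antisymm
    · intro z hz; exact ⟨hz.1.1, hz.1.2, hss.subset hz⟩
    · rintro z ⟨h1, h2, h3⟩; exact ⟨⟨h1, h2⟩, hsub h3⟩
  have hAW := hA (B ∩ Y) hWfin
  have hBY := hB Y hYfin
  rw [hZW]
  rw [hZW] at hss
  rcases Set.eq_or_ssubset_of_subset (inter_subset_right : A ∩ (B ∩ Y) ⊆ B ∩ Y) with h1 | h1
  · rw [h1]
    have hne : B ∩ Y ≠ Y := by
      intro he
      exact hss.ne (h1.trans he)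
    exact hBY.2 Y (Set.ssubset_iff_subset_ne.mpr ⟨inter_subset_right, hne⟩) subset_rfl hYfin
  · calc delta L (A ∩ (B ∩ Y)) < delta L (B ∩ Y) := hAW.2 (B ∩ Y) h1 subset_rfl hWfin
      _ ≤ delta L Y := by
        rcases Set.eq_or_ssubset_of_subset (inter_subset_right : B ∩ Y ⊆ Y) with h2 | h2
        · rw [h2]
        · exact (hBY.2 Y h2 subset_rfl hYfin).le

lemma selfSuffM_clM (X₀ : Set N) : SelfSuffM L (clM L X₀) := by
  intro Y hYfin
  have hind : ∀ T : Set N, T.Finite → T ⊆ Y \ clM L X₀ →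
      ∃ A' : Set N, SelfSuffM L A' ∧ X₀ ⊆ A' ∧ ∀ y ∈ T, y ∉ A' := by
    intro T hTfin
    refine Set.Finite.induction_on _ hTfin (fun _ => ⟨univ, selfSuffM_univ L, subset_univ _, by simp⟩) ?_
    · intro a T ha hTfin ih hsub
      obtain ⟨A', hA'ss, hA'X, hA'T⟩ := ih ((subset_insert a T).trans hsub)
      have haY : a ∈ Y \ clM L X₀ := hsub (mem_insert a T)
      have hna : a ∉ clM L X₀ := haY.2
      simp only [clM, Set.mem_sInter, Set.mem_setOf_eq, not_forall] at hna
      obtain ⟨Aa, hAaF, haAa⟩ := hna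
      refine ⟨A' ∩ Aa, SelfSuffM.inter L hA'ss hAaF.2, subset_inter hA'X hAaF.1, ?_⟩
      intro y hy
      rcases mem_insert_iff.mp hy with rfl | hyT
      · exact fun hc => haAa hc.2
      · exact fun hc => hA'T y hyT hc.1
  obtain ⟨A', hA'ss, hA'X, hA'T⟩ := hind _ (hYfin.subset diff_subset) subset_rfl
  have hclsub : clM L X₀ ⊆ A' := sInter_subset_of_mem ⟨hA'X, hA'ss⟩
  have heq : clM L X₀ ∩ Y = A' ∩ Y := by
    apply subset_antisymm
    · exact inter_subset_inter_left Y hclsub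
    · rintro z ⟨hzA, hzY⟩
      refine ⟨?_, hzY⟩
      by_contra hz
      exact hA'T z ⟨hzY, hz⟩ hzA
  rw [heq]
  exact hA'ss Y hYfin

end SelfSuff

section RelSet

/-- The set of relation instances inside `A`. -/
def relSet {N : Type*} [L.Structure N] (A : Set N) : Set (Σ n, L.Relations n × (Fin n → N)) :=
  {p | (∀ i, p.2.2 i ∈ A) ∧ Language.Structure.RelMap p.2.1 p.2.2}

lemma delta_eq {N : Type*} [L.Structure N] (A : Set N) :
    delta L A = (A.ncard : ℤ) - ((relSet L A).ncard : ℤ) := rfl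

lemma relSet_finite {N : Type*} [L.Structure N] [Finite (Σ n, L.Relations n)]
    {A : Set N} (hA : A.Finite) : (relSet L A).Finite := by
  haveI := hA.to_subtype
  have hF : Function.Injective
      (fun p : relSet L A => (⟨⟨p.1.1, p.1.2.1⟩, fun i => ⟨p.1.2.2 i, p.2.1 i⟩⟩ :
        Σ q : Σ n, L.Relations n, (Fin q.1 → A))) := by
    rintro ⟨⟨n, R, t⟩, hp⟩ ⟨⟨n', R', t'⟩, hp'⟩ h
    simp only [Sigma.mk.inj_iff] at h
    obtain ⟨⟨rfl, hR⟩, h2⟩ := h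
    obtain rfl : R = R' := eq_of_heq hR
    have ht : t = t' := by
      funext i
      exact congrArg Subtype.val (congrFun (eq_of_heq h2) i)
    subst ht; rfl
  exact Set.finite_coe_iff.mp (Finite.of_injective _ hF)

end RelSet


section ExampleAux

variable {N : Type*} [ExLang.Structure N]

/-- Enumeration of the relation instances inside a `≤`-copy of `A`. -/
def psiE (e : ADom ↪[ExLang] N) : Option (Fin rBig) → Σ n, ExLang.Relations n × (Fin n → N)
  | none => ⟨10, ExRels.S, fun i => e (Sum.inl i)⟩
  | some j => ⟨11, ExRels.U, Fin.snoc (fun i => e (Sum.inl i)) (e (Sum.inr j))⟩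

lemma relSet_range_eq (e : ADom ↪[ExLang] N) :
    relSet ExLang (Set.range ⇑e) = Set.range (psiE e) := by
  ext p
  constructor
  · rintro ⟨hmem, hrel⟩
    obtain ⟨n, R, t⟩ := p
    choose s hs using fun i => hmem i
    have ht : ⇑e ∘ s = t := funext hs
    rw [← ht] at hrel ⊢
    rw [e.map_rel] at hrel
    cases R with
    | R => exact hrel.elim
    | S =>
      refine ⟨none, ?_⟩
      have hh : s = fun i => Sum.inl i := hrel
      rw [hh]
      rfl
    | U =>
      obtain ⟨j, hj⟩ := (hrel : ∃ j : Fin rBig, s = _)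
      refine ⟨some j, ?_⟩
      rw [hj]
      simp only [psiE, Fin.comp_snoc]
      rfl
  · rintro ⟨o, rfl⟩
    cases o with
    | none =>
      refine ⟨fun i => mem_range_self _, ?_⟩
      have h0 : Language.Structure.RelMap (L := ExLang) (M := ADom) ExRels.S
          (fun i : Fin 10 => Sum.inl i) := rfl
      exact (e.map_rel ExRels.S fun i => Sum.inl i).mpr h0
    | some j =>
      constructor
      · intro i
        simp only [psiE]
        refine Fin.lastCases ?_ ?_ i
        · rw [Fin.snoc_last]; exact mem_range_self _
        · intro k; rw [Fin.snoc_castSucc]; exact mem_range_self _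
      · have h0 : Language.Structure.RelMap (L := ExLang) (M := ADom) ExRels.U
            (Fin.snoc (fun i : Fin 10 => Sum.inl i) (Sum.inr j)) := ⟨j, rfl⟩
        have h2 := (e.map_rel ExRels.U _).mpr h0
        rw [Fin.comp_snoc] at h2
        exact h2

lemma psiE_inj (e : ADom ↪[ExLang] N) : Function.Injective (psiE e) := by
  intro o o' h
  match o, o' with
  | none, none => rfl
  | none, some j =>
    have h1 := congrArg Sigma.fst h
    simp only [psiE] at h1
    exact absurd h1 (by omega)
  | some j, none =>
    have h1 := congrArg Sigma.fst h
    simp only [psiE] at h1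
    exact absurd h1 (by omega)
  | some j, some j' =>
    simp only [psiE, Sigma.mk.inj_iff, heq_eq_eq, Prod.mk.injEq, true_and] at h
    have h2 := congrFun (Prod.mk.inj h).2 (Fin.last 10)
    simp only [Fin.snoc_last] at h2
    have h3 := e.injective h2
    simp only [Sum.inr.injEq] at h3
    rw [h3]

lemma ncard_relSet_range (e : ADom ↪[ExLang] N) :
    (relSet ExLang (Set.range ⇑e)).ncard = rBig + 1 := by
  rw [relSet_range_eq, ← Set.image_univ, Set.ncard_image_of_injective _ (psiE_inj e),
    Set.ncard_univ, Nat.card_eq_fintype_card, Fintype.card_option, Fintype.card_fin]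

lemma ncard_range_emb (e : ADom ↪[ExLang] N) : (Set.range ⇑e).ncard = 10 + rBig := by
  rw [← Set.image_univ, Set.ncard_image_of_injective _ e.injective, Set.ncard_univ,
    Nat.card_eq_fintype_card, Fintype.card_sum, Fintype.card_fin, Fintype.card_fin]

lemma delta_range_emb (e : ADom ↪[ExLang] N) : delta ExLang (Set.range ⇑e) = 9 := by
  rw [delta_eq, ncard_relSet_range, ncard_range_emb]
  push_cast
  ring

lemma ncard_iUnion_fin_le {α : Type*} : ∀ {m : ℕ} (f : Fin m → Set α),
    (⋃ i, f i).ncard ≤ ∑ i, (f i).ncard := by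
  intro m
  induction m with
  | zero => intro f; simp
  | succ k ih =>
    intro f
    have hU : (⋃ i, f i) = f 0 ∪ ⋃ i : Fin k, f i.succ := by
      ext z
      simp only [mem_iUnion, mem_union]
      constructor
      · rintro ⟨i, hi⟩
        rcases Fin.eq_zero_or_eq_succ i with rfl | ⟨i', rfl⟩
        · exact Or.inl hi
        · exact Or.inr ⟨i', hi⟩
      · rintro (h | ⟨i', hi⟩)
        · exact ⟨0, h⟩
        · exact ⟨i'.succ, hi⟩
    rw [hU, Fin.sum_univ_succ]
    exact le_trans (Set.ncard_union_le _ _) (add_le_add le_rfl (ih _))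

end ExampleAux

/-- **Theorem 4.7**: let `M_f` be the generic structure of `(K_f, ≤)` for
`f(x) = log₈(x+1)`, and let
`E = {(α(a₁),…,α(a₁₀)) : α a ≤-embedding of A into M_f} ⊆ M_f¹⁰`.
Then there is no `d`-independent 10-tuple of distinct elements of `M_f` all of whose
9-element projections lie in the corresponding projections of `E`.
(In particular `M_f` does not satisfy the independent amalgamation property of
Corollary 3.2, and `M_f` is not MS-measurable.) -/
theorem no_independent_amalgamation
    (N : Type) [ExLang.Structure N] [Countable N]
    (hgen : IsGeneric ExLang (N := N) fEx) :
    ¬ ∃ b : Fin 10 → N, Function.Injective b ∧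
      dM ExLang (Set.range b) = 10 ∧
      ∀ I : Finset (Fin 10), I.card = 9 →
        ∃ x ∈ {x : Fin 10 → N | ∃ e : ADom ↪[ExLang] N,
            SelfSuffM ExLang (Set.range ⇑e) ∧ ∀ i : Fin 10, e (Sum.inl i) = x i},
          ∀ i ∈ I, x i = b i := by
  rintro ⟨b, hbinj, hd, hproj⟩
  have herase : ∀ i : Fin 10, (Finset.univ.erase i).card = 9 := by
    intro i
    rw [Finset.card_erase_of_mem (Finset.mem_univ i), Finset.card_univ, Fintype.card_fin]
  have hex : ∀ i : Fin 10, ∃ x : Fin 10 → N, (∃ e : ADom ↪[ExLang] N,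
      SelfSuffM ExLang (Set.range ⇑e) ∧ ∀ k : Fin 10, e (Sum.inl k) = x k) ∧
      ∀ k ∈ Finset.univ.erase i, x k = b k := by
    intro i
    obtain ⟨x, hx1, hx2⟩ := hproj _ (herase i)
    exact ⟨x, hx1, hx2⟩
  choose x hxw hagree using hex
  choose e hss hxe using hxw
  have hxb : ∀ i k, k ≠ i → x i k = b k := fun i k hk =>
    hagree i k (Finset.mem_erase.mpr ⟨hk, Finset.mem_univ k⟩)
  by_cases hcase : ∃ i, ∀ k, x i k = b k
  · -- some copy has `a`-part exactly `b`; then `d(b) ≤ 9`, contradiction.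
    obtain ⟨i, hib⟩ := hcase
    have hbE : Set.range b ⊆ Set.range ⇑(e i) := by
      rintro _ ⟨k, rfl⟩
      exact ⟨Sum.inl k, (hxe i k).trans (hib k)⟩
    have hEfin : (Set.range ⇑(e i)).Finite := Set.finite_range _
    have hclsub : clM ExLang (Set.range b) ⊆ Set.range ⇑(e i) :=
      sInter_subset_of_mem ⟨hbE, hss i⟩
    have hssC := selfSuffM_clM ExLang (Set.range b) (Set.range ⇑(e i)) hEfin
    rw [Set.inter_eq_left.mpr hclsub] at hssC
    have h10 : delta ExLang (clM ExLang (Set.range b)) = 10 := hd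
    have h9 : delta ExLang (Set.range ⇑(e i)) = 9 := delta_range_emb (e i)
    rcases Set.eq_or_ssubset_of_subset hclsub with heq | hlt
    · rw [heq, h9] at h10
      exact absurd h10 (by norm_num)
    · have hc := hssC.2 _ hlt subset_rfl hEfin
      rw [h10, h9] at hc
      exact absurd hc (by norm_num)
  · -- the tuples `x i` are pairwise distinct; count points and relations.
    push_neg at hcase
    have hxx : ∀ i i' : Fin 10, i ≠ i' → x i ≠ x i' := by
      intro i i' hne heq
      obtain ⟨k, hk⟩ := hcase i
      apply hk
      rcases eq_or_ne k i with rfl | hki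
      · rw [congrFun heq k]
        exact hxb i' k hne
      · exact hxb i k hki
    set D : Set N := Set.range b ∪ ⋃ i : Fin 10, Set.range ⇑(e i) with hDdef
    have hDfin : D.Finite :=
      (Set.finite_range b).union (Set.finite_iUnion fun i => Set.finite_range _)
    obtain ⟨⟨c, hmono, hcfin, -, hK, huniv⟩, -⟩ := hgen
    have hcover : ∀ X : Set N, X.Finite → ∃ k, X ⊆ c k := by
      intro X hX
      refine Set.Finite.induction_on _ hX ⟨0, empty_subset _⟩ ?_
      intro a s ha hsfin ih
      obtain ⟨k1, hk1⟩ := ih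
      have haU : a ∈ ⋃ k, c k := huniv ▸ mem_univ a
      obtain ⟨k2, hk2⟩ := mem_iUnion.mp haU
      exact ⟨max k1 k2, insert_subset (hmono (le_max_right k1 k2) hk2)
        (hk1.trans (hmono (le_max_left k1 k2)))⟩
    obtain ⟨k0, hk0⟩ := hcover D hDfin
    have hKf : fEx D.ncard ≤ (delta ExLang D : ℝ) := hK k0 D hk0
    -- size bound
    have hncard_rb : (Set.range b).ncard ≤ 10 := by
      rw [← Set.image_univ]
      refine le_trans (Set.ncard_image_le Set.finite_univ) ?_
      rw [Set.ncard_univ, Nat.card_eq_fintype_card, Fintype.card_fin]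
    have hsub_i : ∀ i : Fin 10, Set.range ⇑(e i) ⊆
        Set.range b ∪ ⇑(e i) '' (insert (Sum.inl i) (Set.range Sum.inr)) := by
      rintro i _ ⟨a, rfl⟩
      rcases a with k | j
      · rcases eq_or_ne k i with rfl | hki
        · exact Or.inr ⟨Sum.inl k, mem_insert _ _, rfl⟩
        · exact Or.inl ⟨k, ((hxe i k).trans (hxb i k hki)).symm⟩
      · exact Or.inr ⟨Sum.inr j, Set.mem_insert_iff.mpr (Or.inr (mem_range_self j)), rfl⟩
    have himg : ∀ i : Fin 10,
        (⇑(e i) '' (insert (Sum.inl i) (Set.range Sum.inr))).ncard ≤ rBig + 1 := by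
      intro i
      rw [Set.ncard_image_of_injective _ (e i).injective]
      refine le_trans (Set.ncard_insert_le _ _) ?_
      rw [← Set.image_univ, Set.ncard_image_of_injective _ Sum.inr_injective, Set.ncard_univ,
        Nat.card_eq_fintype_card, Fintype.card_fin]
    have hDsub : D ⊆ Set.range b ∪
        ⋃ i : Fin 10, ⇑(e i) '' (insert (Sum.inl i) (Set.range Sum.inr)) := by
      rw [hDdef]
      refine union_subset subset_union_left (iUnion_subset fun i => (hsub_i i).trans ?_)
      exact union_subset_union_right _ (subset_iUnion (fun i : Fin 10 => ⇑(e i) '' (insert (Sum.inl i) (Set.range Sum.inr))) i)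
    have hnD : D.ncard ≤ 10 + 10 * (rBig + 1) := by
      refine le_trans (Set.ncard_le_ncard hDsub
        ((Set.finite_range b).union (Set.finite_iUnion fun i => (Set.toFinite _).image _))) ?_
      refine le_trans (Set.ncard_union_le _ _) ?_
      have hU : (⋃ i : Fin 10, ⇑(e i) '' (insert (Sum.inl i) (Set.range Sum.inr))).ncard
          ≤ 10 * (rBig + 1) := by
        refine le_trans (ncard_iUnion_fin_le _) ?_
        calc ∑ i : Fin 10, (⇑(e i) '' (insert (Sum.inl i) (Set.range Sum.inr))).ncard
            ≤ ∑ _i : Fin 10, (rBig + 1) := Finset.sum_le_sum (fun i _ => himg i)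
          _ = 10 * (rBig + 1) := by
            rw [Finset.sum_const, Finset.card_univ, Fintype.card_fin, smul_eq_mul]
      omega
    -- relation lower bound
    have hx_memD : ∀ i k, x i k ∈ D := by
      intro i k
      rw [← hxe i k]
      exact Or.inr (mem_iUnion.mpr ⟨i, mem_range_self _⟩)
    set ψD : Fin 10 × Option (Fin rBig) → Σ n, ExLang.Relations n × (Fin n → N) :=
      fun p => Option.elim p.2 ⟨10, ExRels.S, x p.1⟩
        (fun j => ⟨11, ExRels.U, Fin.snoc (x p.1) ((e p.1) (Sum.inr j))⟩) with hψDdef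
    have hψDmem : ∀ p, ψD p ∈ relSet ExLang D := by
      rintro ⟨i, o⟩
      cases o with
      | none =>
        refine ⟨fun k => hx_memD i k, ?_⟩
        have hcomp : ⇑(e i) ∘ (fun k : Fin 10 => Sum.inl k) = x i := funext (hxe i)
        have h0 := ((e i).map_rel ExRels.S (fun k : Fin 10 => Sum.inl k)).mpr rfl
        rwa [hcomp] at h0
      | some j =>
        constructor
        · intro k
          refine Fin.lastCases ?_ ?_ k
          · show (Fin.snoc (x i) ((e i) (Sum.inr j)) : Fin 11 → N) (Fin.last 10) ∈ D
            rw [Fin.snoc_last]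
            exact Or.inr (mem_iUnion.mpr ⟨i, mem_range_self _⟩)
          · intro m
            show (Fin.snoc (x i) ((e i) (Sum.inr j)) : Fin 11 → N) m.castSucc ∈ D
            rw [Fin.snoc_castSucc]
            exact hx_memD i m
        · have h0 : Language.Structure.RelMap (L := ExLang) (M := ADom) ExRels.U
              (Fin.snoc (fun k : Fin 10 => Sum.inl k) (Sum.inr j)) := ⟨j, rfl⟩
          have h2 := ((e i).map_rel ExRels.U _).mpr h0
          rw [Fin.comp_snoc] at h2
          have hcomp : ⇑(e i) ∘ (fun k : Fin 10 => Sum.inl k) = x i := funext (hxe i)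
          rwa [hcomp] at h2
    have hψDinj : Function.Injective ψD := by
      rintro ⟨i, o⟩ ⟨i', o'⟩ h
      match o, o' with
      | none, none =>
        have h2 : (⟨10, ExRels.S, x i⟩ : Σ n, ExLang.Relations n × (Fin n → N))
            = ⟨10, ExRels.S, x i'⟩ := h
        simp only [Sigma.mk.inj_iff, heq_eq_eq, Prod.mk.injEq, true_and] at h2
        have hii : i = i' := by
          by_contra hne
          exact hxx i i' hne (Prod.mk.inj h2).2
        rw [hii]
      | none, some j =>
        have h1 : (10 : ℕ) = 11 := congrArg Sigma.fst h
        exact absurd h1 (by omega)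
      | some j, none =>
        have h1 : (11 : ℕ) = 10 := congrArg Sigma.fst h
        exact absurd h1 (by omega)
      | some j, some j' =>
        have h2 : (⟨11, ExRels.U, Fin.snoc (x i) ((e i) (Sum.inr j))⟩ :
            Σ n, ExLang.Relations n × (Fin n → N))
            = ⟨11, ExRels.U, Fin.snoc (x i') ((e i') (Sum.inr j'))⟩ := h
        simp only [Sigma.mk.inj_iff, heq_eq_eq, Prod.mk.injEq, true_and] at h2
        have hxeq : x i = x i' := by
          funext m
          have hm := congrFun (Prod.mk.inj h2).2 m.castSucc
          rwa [Fin.snoc_castSucc, Fin.snoc_castSucc] at hm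
        have hii : i = i' := by
          by_contra hne
          exact hxx i i' hne hxeq
        subst hii
        have hlast := congrFun (Prod.mk.inj h2).2 (Fin.last 10)
        rw [Fin.snoc_last, Fin.snoc_last] at hlast
        have hj := (e i).injective hlast
        simp only [Sum.inr.injEq] at hj
        rw [hj]
    have hrelD : 10 * (rBig + 1) ≤ (relSet ExLang D).ncard := by
      have h1 : (Set.range ψD).ncard = 10 * (rBig + 1) := by
        rw [← Set.image_univ, Set.ncard_image_of_injective _ hψDinj, Set.ncard_univ,
          Nat.card_eq_fintype_card, Fintype.card_prod, Fintype.card_option,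
          Fintype.card_fin, Fintype.card_fin]
      rw [← h1]
      exact Set.ncard_le_ncard (range_subset_iff.mpr hψDmem) (relSet_finite ExLang hDfin)
    -- arithmetic
    have hdle : (delta ExLang D : ℝ) ≤ (D.ncard : ℝ) - ((10 * (rBig + 1) : ℕ) : ℝ) := by
      rw [delta_eq]
      push_cast
      have hc' : ((10 * (rBig + 1) : ℕ) : ℝ) ≤ ((relSet ExLang D).ncard : ℝ) := by
        exact_mod_cast hrelD
      push_cast at hc'
      linarith
    have hn1 : 1 ≤ D.ncard := by
      have hne : D.Nonempty := ⟨b 0, Or.inl (mem_range_self 0)⟩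
      have hp := (Set.ncard_pos hDfin).mpr hne
      omega
    have hflog : Real.logb 8 ((D.ncard : ℝ) + 1) ≤ (D.ncard : ℝ) - ((10 * (rBig + 1) : ℕ) : ℝ) := by
      calc Real.logb 8 ((D.ncard : ℝ) + 1) = fEx D.ncard := rfl
        _ ≤ (delta ExLang D : ℝ) := hKf
        _ ≤ _ := hdle
    rcases le_or_gt D.ncard (10 * (rBig + 1)) with hle | hgt
    · have hpos : 0 < Real.logb 8 ((D.ncard : ℝ) + 1) := by
        refine Real.logb_pos (by norm_num) ?_
        have h1' : (1 : ℝ) ≤ (D.ncard : ℝ) := by exact_mod_cast hn1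
        linarith
      have hle' : (D.ncard : ℝ) ≤ ((10 * (rBig + 1) : ℕ) : ℝ) := by exact_mod_cast hle
      linarith
    · have hbig : (1342177181 : ℕ) ≤ D.ncard := by
        have : 10 * (rBig + 1) = 1342177180 := by norm_num [rBig]
        omega
      have hbig' : (1342177181 : ℝ) ≤ (D.ncard : ℝ) := by exact_mod_cast hbig
      have h10lt : (10 : ℝ) < Real.logb 8 ((D.ncard : ℝ) + 1) := by
        rw [show (10 : ℝ) = Real.logb 8 ((8 : ℝ) ^ (10 : ℝ)) from
          (Real.logb_rpow (by norm_num) (by norm_num)).symm]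
        refine Real.logb_lt_logb (by norm_num) (by positivity) ?_
        rw [show ((10 : ℝ)) = ((10 : ℕ) : ℝ) by norm_num, Real.rpow_natCast]
        norm_num
        linarith
      have hnd' : (D.ncard : ℝ) ≤ 10 + ((10 * (rBig + 1) : ℕ) : ℝ) := by
        exact_mod_cast hnD
      linarith

end MeasureAmalgamation
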